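/- Let (X,d) be a Hausdorff left K-complete T₀-quasi-pseudometric space, φ : X → ℝ bounded from above, and ⪯ the preorder induced by φ (x ⪯ y iff d(x,y) ≤ φ(y) − φ(x)). Let F : X × X → X be preorder-preserving (x ⪯ z and y ⪯ w implies F(x,y) ⪯ F(z,w)) and d-sequentially continuous. If there exist x₀, y₀ ∈ X with x₀ ⪯ F(x₀,y₀) and y₀ ⪯ F(y₀,x₀), then F has a coupled fixed point: there exist x*, y* ∈ X with F(x*,y*) = x* and F(y*,x*) = y*. -/

import Mathlib

open Filter

/-- Auxiliary: a sequence whose consecutive distances are controlled by increments of a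
bounded-above `φ` is left K-Cauchy. -/
lemma aux_cauchy {X : Type*} (d : X → X → ℝ) (φ : X → ℝ)
    (hnn : ∀ x y, 0 ≤ d x y) (hrefl : ∀ x, d x x = 0)
    (htri : ∀ x y z, d x z ≤ d x y + d y z)
    (hbdd : ∃ M : ℝ, ∀ x, φ x ≤ M)
    (xs : ℕ → X)
    (hstep : ∀ n, d (xs n) (xs (n + 1)) ≤ φ (xs (n + 1)) - φ (xs n)) :
    ∀ ε > (0 : ℝ), ∃ n₀, ∀ k n, n₀ ≤ k → k ≤ n → d (xs k) (xs n) < ε := by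
  have hchain : ∀ k n, k ≤ n → d (xs k) (xs n) ≤ φ (xs n) - φ (xs k) := by
    intro k n hkn
    induction n, hkn using Nat.le_induction with
    | base => simp [hrefl]
    | succ n hkn ih =>
      calc d (xs k) (xs (n + 1)) ≤ d (xs k) (xs n) + d (xs n) (xs (n + 1)) := htri _ _ _
        _ ≤ (φ (xs n) - φ (xs k)) + (φ (xs (n + 1)) - φ (xs n)) := by
            exact add_le_add ih (hstep n)
        _ = φ (xs (n + 1)) - φ (xs k) := by ring
  have hmono : Monotone (fun n => φ (xs n)) := by
    intro k n hkn
    have := hchain k n hkn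
    have := hnn (xs k) (xs n)
    simp only; linarith
  obtain ⟨M, hM⟩ := hbdd
  have hbdd' : BddAbove (Set.range fun n => φ (xs n)) := ⟨M, by rintro _ ⟨n, rfl⟩; exact hM _⟩
  have htend : Tendsto (fun n => φ (xs n)) atTop (nhds (⨆ n, φ (xs n))) :=
    tendsto_atTop_ciSup hmono hbdd'
  intro ε hε
  rw [Metric.tendsto_atTop] at htend
  obtain ⟨N, hN⟩ := htend (ε / 2) (by linarith)
  refine ⟨N, fun k n hNk hkn => ?_⟩
  have h1 := hN k hNk
  have h2 := hN n (hNk.trans hkn)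
  rw [Real.dist_eq, abs_lt] at h1 h2
  have := hchain k n hkn
  linarith [h1.1, h1.2, h2.1, h2.2]

/-- Theorem 3.4: a preorder-preserving, d-sequentially continuous map
`F : X × X → X` on a Hausdorff left K-complete T₀-quasi-pseudometric space,
with `x₀ ⪯ F(x₀,y₀)` and `y₀ ⪯ F(y₀,x₀)` for the preorder induced by a
bounded-above `φ`, has a coupled fixed point. -/
theorem coupled_fixed_point {X : Type*} (d : X → X → ℝ) (φ : X → ℝ)
    (hnn : ∀ x y, 0 ≤ d x y) (hrefl : ∀ x, d x x = 0)
    (htri : ∀ x y z, d x z ≤ d x y + d y z)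
    (hT0 : ∀ x y, d x y = 0 → d y x = 0 → x = y)
    (hHausdorff : ∀ (xs : ℕ → X) (a b : X),
      Tendsto (fun n => d a (xs n)) atTop (nhds 0) →
      Tendsto (fun n => d b (xs n)) atTop (nhds 0) → a = b)
    (hcomplete : ∀ xs : ℕ → X,
      (∀ ε > (0 : ℝ), ∃ n₀, ∀ k n, n₀ ≤ k → k ≤ n → d (xs k) (xs n) < ε) →
      ∃ a : X, Tendsto (fun n => d a (xs n)) atTop (nhds 0))
    (hbdd : ∃ M : ℝ, ∀ x, φ x ≤ M)
    (F : X → X → X)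
    (hpres : ∀ x y z w : X, d x z ≤ φ z - φ x → d y w ≤ φ w - φ y →
      d (F x y) (F z w) ≤ φ (F z w) - φ (F x y))
    (hcont : ∀ (xs ys : ℕ → X) (a b : X),
      Tendsto (fun n => d a (xs n)) atTop (nhds 0) →
      Tendsto (fun n => d b (ys n)) atTop (nhds 0) →
      Tendsto (fun n => d (F a b) (F (xs n) (ys n))) atTop (nhds 0))
    (x₀ y₀ : X)
    (hx₀ : d x₀ (F x₀ y₀) ≤ φ (F x₀ y₀) - φ x₀)
    (hy₀ : d y₀ (F y₀ x₀) ≤ φ (F y₀ x₀) - φ y₀) :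
    ∃ a b : X, F a b = a ∧ F b a = b := by
  set g : X × X → X × X := fun p => (F p.1 p.2, F p.2 p.1) with hg
  set p : ℕ → X × X := fun n => g^[n] (x₀, y₀) with hp
  set xs : ℕ → X := fun n => (p n).1 with hxs
  set ys : ℕ → X := fun n => (p n).2 with hys
  have hp0 : p 0 = (x₀, y₀) := rfl
  have hpsucc : ∀ n, p (n + 1) = g (p n) := fun n => Function.iterate_succ_apply' g n _
  have hxsucc : ∀ n, xs (n + 1) = F (xs n) (ys n) := fun n => by
    simp [hxs, hys, hpsucc n, hg]
  have hysucc : ∀ n, ys (n + 1) = F (ys n) (xs n) := fun n => by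
    simp [hxs, hys, hpsucc n, hg]
  have hstep : ∀ n, d (xs n) (xs (n + 1)) ≤ φ (xs (n + 1)) - φ (xs n) ∧
      d (ys n) (ys (n + 1)) ≤ φ (ys (n + 1)) - φ (ys n) := by
    intro n
    induction n with
    | zero =>
      constructor
      · rw [hxsucc 0]; simpa [hxs, hys, hp0] using hx₀
      · rw [hysucc 0]; simpa [hxs, hys, hp0] using hy₀
    | succ n ih =>
      constructor
      · rw [hxsucc n, hxsucc (n + 1)]
        exact hpres _ _ _ _ ih.1 ih.2
      · rw [hysucc n, hysucc (n + 1)]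
        exact hpres _ _ _ _ ih.2 ih.1
  obtain ⟨a, ha⟩ := hcomplete xs
    (aux_cauchy d φ hnn hrefl htri hbdd xs fun n => (hstep n).1)
  obtain ⟨b, hb⟩ := hcomplete ys
    (aux_cauchy d φ hnn hrefl htri hbdd ys fun n => (hstep n).2)
  have hshift : Tendsto (fun n : ℕ => n + 1) atTop atTop := tendsto_add_atTop_nat 1
  have ha' : Tendsto (fun n => d a (xs (n + 1))) atTop (nhds 0) := ha.comp hshift
  have hb' : Tendsto (fun n => d b (ys (n + 1))) atTop (nhds 0) := hb.comp hshift
  have hFa : Tendsto (fun n => d (F a b) (xs (n + 1))) atTop (nhds 0) := by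
    have := hcont xs ys a b ha hb
    simpa [fun n => (hxsucc n).symm] using this
  have hFb : Tendsto (fun n => d (F b a) (ys (n + 1))) atTop (nhds 0) := by
    have := hcont ys xs b a hb ha
    simpa [fun n => (hysucc n).symm] using this
  exact ⟨a, b, hHausdorff (fun n => xs (n + 1)) (F a b) a hFa ha',
    hHausdorff (fun n => ys (n + 1)) (F b a) b hFb hb'⟩
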